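/- arXiv:2509.14433 — 4 statements merged into one kernel-verified Lean document; each statement's English description precedes it below -/
import Mathlib

section
/- Let V ≥ 2 be a natural number with (V : ℝ) > e and let c > 0 be a real number. Let X_1, …, X_V be ℕ-valued random variables on a common probability space (not necessarily independent) such that for every index i and every natural number k, P(X_i ≥ k) ≤ (1/log V)^k. Then the probability that there exists an index i with (X_i : ℝ) ≥ (c+1) · log V / log log V is at most V^(-c). -/
open MeasureTheory

/-- Let `V ≥ 2` be a natural number with `(V : ℝ) > e` and `c > 0` real. Let
`X_1, …, X_V` be ℕ-valued random variables on a common probability space (not necessarily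
independent) such that `P(X_i ≥ k) ≤ (1/log V)^k` for all `i` and `k`. Then the probability
that some `i` has `(X_i : ℝ) ≥ (c+1) · log V / log log V` is at most `V^(-c)`
(the maximum height of a reduced-height skip list is `O(log V / log log V)` w.h.p.). -/
theorem skip_list_max_height
    {Ω : Type*} [MeasurableSpace Ω] (μ : Measure Ω) [IsProbabilityMeasure μ]
    (V : ℕ) (hV2 : 2 ≤ V) (hV : (V : ℝ) > Real.exp 1) (c : ℝ) (hc : c > 0)
    (X : Fin V → Ω → ℕ)
    (hX : ∀ (i : Fin V) (k : ℕ),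
      μ {ω | (k : ℕ) ≤ X i ω} ≤ ENNReal.ofReal ((1 / Real.log (V : ℝ)) ^ k)) :
    μ {ω | ∃ i : Fin V,
        (c + 1) * Real.log (V : ℝ) / Real.log (Real.log (V : ℝ)) ≤ (X i ω : ℝ)}
      ≤ ENNReal.ofReal ((V : ℝ) ^ (-c)) := by
  have hV0 : (0:ℝ) < V := lt_trans (Real.exp_pos 1) hV
  set L := Real.log (V:ℝ) with hLdef
  have hL : 1 < L := by
    calc (1:ℝ) = Real.log (Real.exp 1) := (Real.log_exp 1).symm
    _ < L := Real.log_lt_log (Real.exp_pos 1) hV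
  have hL0 : 0 < L := lt_trans one_pos hL
  have hLL : 0 < Real.log L := Real.log_pos hL
  set k := ⌈(c+1)*L / Real.log L⌉₊ with hkdef
  have hk : (c+1)*L/Real.log L ≤ (k:ℝ) := Nat.le_ceil _
  have h1 : (c+1)*L ≤ (k:ℝ) * Real.log L := by
    rw [div_le_iff₀ hLL] at hk; linarith
  have hexp : (V:ℝ) ^ (c+1) ≤ L ^ k := by
    calc (V:ℝ) ^ (c+1) = Real.exp ((c+1) * L) := by
          rw [Real.rpow_def_of_pos hV0, mul_comm]
    _ ≤ Real.exp ((k:ℝ) * Real.log L) := Real.exp_le_exp.2 h1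
    _ = L ^ k := by rw [← Real.log_pow, Real.exp_log (pow_pos hL0 k)]
  have hreal : (V:ℝ) * (1/L)^k ≤ (V:ℝ) ^ (-c) := by
    have hinv : (1/L)^k ≤ (V:ℝ) ^ (-(c+1)) := by
      rw [one_div, inv_pow, Real.rpow_neg hV0.le]
      exact inv_anti₀ (Real.rpow_pos_of_pos hV0 _) hexp
    calc (V:ℝ) * (1/L)^k ≤ (V:ℝ) * (V:ℝ) ^ (-(c+1)) := by
          exact mul_le_mul_of_nonneg_left hinv hV0.le
    _ = (V:ℝ) ^ (1 + -(c+1)) := by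
          rw [Real.rpow_add hV0, Real.rpow_one]
    _ = (V:ℝ) ^ (-c) := by ring_nf
  have hsub : {ω | ∃ i : Fin V, (c+1)*L / Real.log L ≤ (X i ω : ℝ)}
      ⊆ ⋃ i : Fin V, {ω | k ≤ X i ω} := by
    rintro ω ⟨i, hi⟩
    exact Set.mem_iUnion.2 ⟨i, Nat.ceil_le.2 hi⟩
  calc μ {ω | ∃ i : Fin V, (c+1)*L / Real.log L ≤ (X i ω : ℝ)}
      ≤ μ (⋃ i : Fin V, {ω | k ≤ X i ω}) := measure_mono hsub
  _ ≤ ∑ i : Fin V, μ {ω | k ≤ X i ω} := measure_iUnion_fintype_le μ _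
  _ ≤ ∑ _i : Fin V, ENNReal.ofReal ((1/L)^k) :=
      Finset.sum_le_sum (fun i _ => hX i k)
  _ = (V : ENNReal) * ENNReal.ofReal ((1/L)^k) := by
      simp [Finset.sum_const, nsmul_eq_mul]
  _ = ENNReal.ofReal ((V:ℝ) * (1/L)^k) := by
      rw [ENNReal.ofReal_mul hV0.le, ENNReal.ofReal_natCast]
  _ ≤ ENNReal.ofReal ((V:ℝ) ^ (-c)) := ENNReal.ofReal_le_ofReal hreal
end

section
/- Let n and k be natural numbers with k ≤ n and let p be a real number with 0 ≤ p ≤ 1. If Y is distributed according to the binomial distribution with n trials and success probability p, then P(Y ≤ k) ≤ C(n, k) · (1 - p)^(n - k), where C(n, k) denotes the binomial coefficient 'n choose k'. -/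
open scoped ENNReal

/-- Auxiliary: the binomial sum in `ℝ≥0∞` equals 1 when `q ≤ 1`. -/
lemma binom_sum_one_ennreal (q : ℝ≥0∞) (hq : q ≤ 1) (m : ℕ) :
    ∑ i ∈ Finset.range (m + 1), (m.choose i : ℝ≥0∞) * q ^ i * (1 - q) ^ (m - i) = 1 := by
  have h := add_pow q (1 - q) m
  rw [add_tsub_cancel_of_le hq, one_pow] at h
  calc ∑ i ∈ Finset.range (m + 1), (m.choose i : ℝ≥0∞) * q ^ i * (1 - q) ^ (m - i)
      = ∑ i ∈ Finset.range (m + 1), q ^ i * (1 - q) ^ (m - i) * (m.choose i : ℝ≥0∞) :=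
        Finset.sum_congr rfl fun i _ => by ring
    _ = 1 := h.symm

/-- Let `k ≤ n` be naturals and `0 ≤ p ≤ 1` real. If `Y` is binomially distributed with
`n` trials and success probability `p`, then `P(Y ≤ k) ≤ C(n, k) · (1 - p)^(n - k)`. -/
theorem binomial_lower_tail_choose_bound (n k : ℕ) (hk : k ≤ n)
    (p : ℝ) (hp0 : 0 ≤ p) (hp1 : p ≤ 1) :
    (PMF.binomial (Real.toNNReal p) (Real.toNNReal_le_one.mpr hp1) n).toMeasure
        {y | (y : ℕ) ≤ k}
      ≤ ENNReal.ofReal ((n.choose k : ℝ) * (1 - p) ^ (n - k)) := by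
  set q : ℝ≥0∞ := ENNReal.ofReal p with hqdef
  have hq1 : q ≤ 1 := ENNReal.ofReal_le_one.mpr hp1
  -- rewrite RHS
  have hRHS : ENNReal.ofReal ((n.choose k : ℝ) * (1 - p) ^ (n - k))
      = (n.choose k : ℝ≥0∞) * (1 - q) ^ (n - k) := by
    rw [ENNReal.ofReal_mul (by positivity), ENNReal.ofReal_pow (by linarith),
      ENNReal.ofReal_natCast, ENNReal.ofReal_sub _ hp0, ENNReal.ofReal_one]
  rw [hRHS]
  -- measure of the set as a sum
  have hmeas : (PMF.binomial (Real.toNNReal p) (Real.toNNReal_le_one.mpr hp1) n).toMeasure {y | (y : ℕ) ≤ k}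
      = ∑ y : Fin (n + 1), Set.indicator ({y | (y : ℕ) ≤ k} : Set (Fin (n+1)))
          ⇑(PMF.binomial (Real.toNNReal p) (Real.toNNReal_le_one.mpr hp1) n) y := by
    rw [PMF.toMeasure_apply _ (MeasurableSet.of_discrete), tsum_fintype]
  rw [hmeas]
  -- bound each term
  have hterm : ∀ y : Fin (n + 1),
      Set.indicator ({y | (y : ℕ) ≤ k} : Set (Fin (n+1))) ⇑(PMF.binomial (Real.toNNReal p) (Real.toNNReal_le_one.mpr hp1) n) y
        ≤ (n.choose k : ℝ≥0∞) * (1 - q) ^ (n - k)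
            * ((k.choose (y : ℕ) : ℝ≥0∞) * q ^ (y : ℕ) * (1 - q) ^ (k - (y : ℕ))) := by
    intro y
    by_cases hy : (y : ℕ) ≤ k
    · rw [Set.indicator_apply, if_pos (show y ∈ {y : Fin (n+1) | (y : ℕ) ≤ k} from hy), PMF.binomial_apply]
      simp only [Fin.val_last]
      push_cast
      have hsplit : n - (y : ℕ) = (n - k) + (k - (y : ℕ)) := by omega
      have hchoose : (n.choose (y : ℕ) : ℝ≥0∞)
          ≤ (n.choose k : ℝ≥0∞) * (k.choose (y : ℕ) : ℝ≥0∞) := by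
        rw [← Nat.cast_mul]
        exact_mod_cast Nat.le_mul_of_pos_right _
          (Nat.choose_pos (by omega)) |>.trans
          (le_of_eq (Nat.choose_mul (n := n) hy).symm) |>.trans le_rfl
      calc q ^ (y : ℕ) * (1 - q) ^ (n - (y : ℕ)) * (n.choose (y : ℕ) : ℝ≥0∞)
          ≤ q ^ (y : ℕ) * (1 - q) ^ (n - (y : ℕ))
            * ((n.choose k : ℝ≥0∞) * (k.choose (y : ℕ) : ℝ≥0∞)) := by
            exact mul_le_mul_right hchoose _
        _ = (n.choose k : ℝ≥0∞) * (1 - q) ^ (n - k)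
            * ((k.choose (y : ℕ) : ℝ≥0∞) * q ^ (y : ℕ) * (1 - q) ^ (k - (y : ℕ))) := by
            rw [hsplit, pow_add]; ring
    · rw [Set.indicator_apply, if_neg (show y ∉ {y : Fin (n+1) | (y : ℕ) ≤ k} from hy)]
      exact zero_le
  calc ∑ y : Fin (n + 1), Set.indicator ({y | (y : ℕ) ≤ k} : Set (Fin (n+1))) ⇑(PMF.binomial (Real.toNNReal p) (Real.toNNReal_le_one.mpr hp1) n) y
      ≤ ∑ y : Fin (n + 1), (n.choose k : ℝ≥0∞) * (1 - q) ^ (n - k)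
          * ((k.choose (y : ℕ) : ℝ≥0∞) * q ^ (y : ℕ) * (1 - q) ^ (k - (y : ℕ))) :=
        Finset.sum_le_sum fun y _ => hterm y
    _ = (n.choose k : ℝ≥0∞) * (1 - q) ^ (n - k)
          * ∑ y : Fin (n + 1), ((k.choose (y : ℕ) : ℝ≥0∞) * q ^ (y : ℕ)
            * (1 - q) ^ (k - (y : ℕ))) := by rw [Finset.mul_sum]
    _ ≤ (n.choose k : ℝ≥0∞) * (1 - q) ^ (n - k) * 1 := by
        apply mul_le_mul_right
        have : ∑ y : Fin (n + 1), ((k.choose (y : ℕ) : ℝ≥0∞) * q ^ (y : ℕ)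
            * (1 - q) ^ (k - (y : ℕ)))
            = ∑ i ∈ Finset.range (n + 1), ((k.choose i : ℝ≥0∞) * q ^ i
              * (1 - q) ^ (k - i)) := by
          rw [Finset.sum_range fun i => ((k.choose i : ℝ≥0∞) * q ^ i * (1 - q) ^ (k - i))]
        rw [this]
        apply le_of_eq
        calc ∑ i ∈ Finset.range (n + 1), ((k.choose i : ℝ≥0∞) * q ^ i * (1 - q) ^ (k - i))
            = ∑ i ∈ Finset.range (k + 1), ((k.choose i : ℝ≥0∞) * q ^ i * (1 - q) ^ (k - i)) := by
              symm
              apply Finset.sum_subset (by intro x hx; simp at hx ⊢; omega)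
              intro x _ hx
              simp only [Finset.mem_range, not_lt] at hx
              rw [Nat.choose_eq_zero_of_lt (by omega)]
              simp
          _ = 1 := binom_sum_one_ennreal q hq1 k
    _ = (n.choose k : ℝ≥0∞) * (1 - q) ^ (n - k) := by rw [mul_one]
end

section
/- Let n and k be natural numbers with 1 ≤ k ≤ n and let p be a real number with 0 ≤ p ≤ 1. If Y is distributed according to the binomial distribution with n trials and success probability p, then P(Y ≤ k) ≤ (e·n/k)^k · exp(−p·(n − k)). -/
open Finset

lemma sum_choose_le_pow (n k : ℕ) (hk1 : 1 ≤ k) (hkn : k ≤ n) :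
    (∑ i ∈ Finset.range (k+1), (n.choose i : ℝ)) ≤ (Real.exp 1 * n / k) ^ k := by
  have hn0 : (0:ℝ) < n := by
    have : 1 ≤ n := le_trans hk1 hkn
    exact_mod_cast Nat.lt_of_lt_of_le Nat.zero_lt_one this
  have hk0 : (0:ℝ) < k := by exact_mod_cast hk1
  set x : ℝ := (k:ℝ)/n with hxdef
  have hx0 : 0 < x := div_pos hk0 hn0
  have hx1 : x ≤ 1 := div_le_one_of_le₀ (by exact_mod_cast hkn) hn0.le
  have h1 : x^k * (∑ i ∈ range (k+1), (n.choose i:ℝ))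
      ≤ ∑ i ∈ range (k+1), (n.choose i:ℝ) * x^i := by
    rw [Finset.mul_sum]
    apply Finset.sum_le_sum
    intro i hi
    rw [mem_range] at hi
    rw [mul_comm]
    have : x ^ k ≤ x ^ i := pow_le_pow_of_le_one hx0.le hx1 (by omega)
    exact mul_le_mul_of_nonneg_left this (Nat.cast_nonneg _)
  have h2 : (∑ i ∈ range (k+1), (n.choose i:ℝ) * x^i) ≤ (x+1)^n := by
    rw [add_pow]
    calc (∑ i ∈ range (k+1), (n.choose i:ℝ) * x^i)
        = ∑ i ∈ range (k+1), x^i * 1^(n-i) * (n.choose i:ℝ) := by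
          apply Finset.sum_congr rfl; intro i _; ring
      _ ≤ ∑ i ∈ range (n+1), x^i * 1^(n-i) * (n.choose i:ℝ) := by
          apply Finset.sum_le_sum_of_subset_of_nonneg
          · exact Finset.range_subset_range.mpr (by omega)
          · intro i _ _; positivity
  have h3 : (x+1)^n ≤ (Real.exp 1)^k := by
    have e1 : x + 1 ≤ Real.exp x := by linarith [Real.add_one_le_exp x]
    calc (x+1)^n ≤ (Real.exp x)^n := pow_le_pow_left₀ (by linarith) e1 n
      _ = Real.exp ((n:ℝ) * x) := (Real.exp_nat_mul x n).symm
      _ = Real.exp (k:ℝ) := by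
          congr 1
          rw [hxdef]; field_simp [hn0.ne']
      _ = (Real.exp 1)^k := by rw [← Real.exp_nat_mul]; norm_num
  have hfinal : x^k * (∑ i ∈ range (k+1), (n.choose i:ℝ)) ≤ (Real.exp 1)^k :=
    le_trans h1 (le_trans h2 h3)
  have : (∑ i ∈ range (k+1), (n.choose i:ℝ)) ≤ (Real.exp 1)^k / x^k := by
    rw [le_div_iff₀ (by positivity)]
    linarith [hfinal]
  refine le_trans this ?_
  rw [← div_pow]
  apply pow_le_pow_left₀ (by positivity)
  rw [hxdef]
  rw [div_div_eq_mul_div]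


/-- Let `1 ≤ k ≤ n` be naturals and `0 ≤ p ≤ 1` real. If `Y` is binomially distributed with
`n` trials and success probability `p`, then `P(Y ≤ k) ≤ (e·n/k)^k · exp(−p·(n − k))`. -/
theorem binomial_lower_tail_exp_bound (n k : ℕ) (hk1 : 1 ≤ k) (hkn : k ≤ n)
    (p : ℝ) (hp0 : 0 ≤ p) (hp1 : p ≤ 1) :
    (PMF.binomial (Real.toNNReal p) (Real.toNNReal_le_one.mpr hp1) n).toMeasure
        {y | (y : ℕ) ≤ k}
      ≤ ENNReal.ofReal ((Real.exp 1 * n / k) ^ k * Real.exp (-(p * ((n : ℝ) - k)))) := by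
  set q := Real.toNNReal p with hq
  set hq1 := Real.toNNReal_le_one.mpr hp1
  have h1p0 : (0:ℝ) ≤ 1 - p := by linarith
  have h1p1 : (1:ℝ) - p ≤ 1 := by linarith
  have hval : ∀ y : Fin (n+1), PMF.binomial q hq1 n y
      = ENNReal.ofReal (p^(y:ℕ) * (1-p)^(n-(y:ℕ)) * (n.choose (y:ℕ) : ℝ)) := by
    intro y
    rw [PMF.binomial_apply, Fin.val_last, ENNReal.ofReal_mul (by positivity),
      ENNReal.ofReal_mul (by positivity), ENNReal.ofReal_pow hp0, ENNReal.ofReal_pow h1p0,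
      ENNReal.ofReal_natCast, ENNReal.ofReal_sub _ hp0, ENNReal.ofReal_one]
    rfl
  have hmeas : (PMF.binomial q hq1 n).toMeasure {y | (y : ℕ) ≤ k}
      = ∑ i ∈ Finset.range (k+1),
          ENNReal.ofReal (p ^ i * (1-p) ^ (n-i) * (n.choose i : ℝ)) := by
    rw [PMF.toMeasure_apply _ MeasurableSet.of_discrete, tsum_fintype,
      Finset.sum_indicator_eq_sum_filter]
    refine Finset.sum_nbij' (fun y => (y : ℕ)) (fun i => ⟨i % (n+1), Nat.mod_lt _ (by omega)⟩)
      ?_ ?_ ?_ ?_ ?_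
    · intro a ha
      simp only [Finset.mem_filter, Set.mem_setOf_eq] at ha
      exact Finset.mem_range.mpr (Nat.lt_succ_of_le ha.2)
    · intro i hi
      rw [Finset.mem_range] at hi
      simp only [Finset.mem_filter, Finset.mem_univ, Set.mem_setOf_eq, true_and]
      simp only [Nat.mod_eq_of_lt (by omega : i < n+1)]
      omega
    · intro a ha
      ext
      simp [Nat.mod_eq_of_lt a.isLt]
    · intro i hi
      rw [Finset.mem_range] at hi
      simp [Nat.mod_eq_of_lt (by omega : i < n+1)]
    · intro a ha
      rw [hval a]
  rw [hmeas]
  have hsum : (∑ i ∈ Finset.range (k+1),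
        ENNReal.ofReal (p ^ i * (1-p) ^ (n-i) * (n.choose i : ℝ)))
      = ENNReal.ofReal (∑ i ∈ Finset.range (k+1), p ^ i * (1-p) ^ (n-i) * (n.choose i : ℝ)) := by
    rw [ENNReal.ofReal_sum_of_nonneg]
    intro i _; positivity
  rw [hsum]
  apply ENNReal.ofReal_le_ofReal
  -- real inequality
  have hterm : ∀ i ∈ Finset.range (k+1),
      p ^ i * (1-p) ^ (n-i) * (n.choose i : ℝ) ≤ (n.choose i : ℝ) * (1-p) ^ (n-k) := by
    intro i hi
    rw [Finset.mem_range] at hi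
    have h1 : p ^ i ≤ 1 := pow_le_one₀ hp0 hp1
    have h2 : (1-p) ^ (n-i) ≤ (1-p) ^ (n-k) :=
      pow_le_pow_of_le_one h1p0 h1p1 (Nat.sub_le_sub_left (by omega) n)
    calc p ^ i * (1-p) ^ (n-i) * (n.choose i : ℝ)
        ≤ 1 * ((1-p) ^ (n-k)) * (n.choose i : ℝ) := by
          apply mul_le_mul_of_nonneg_right _ (Nat.cast_nonneg _)
          exact mul_le_mul h1 h2 (by positivity) (by norm_num)
      _ = (n.choose i : ℝ) * (1-p) ^ (n-k) := by ring
  have hexp : (1-p) ^ (n-k) ≤ Real.exp (-(p * ((n:ℝ) - k))) := by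
    have h1 : (1:ℝ) - p ≤ Real.exp (-p) := by linarith [Real.add_one_le_exp (-p)]
    calc (1-p) ^ (n-k) ≤ (Real.exp (-p)) ^ (n-k) := pow_le_pow_left₀ h1p0 h1 _
      _ = Real.exp (((n-k : ℕ):ℝ) * (-p)) := (Real.exp_nat_mul _ _).symm
      _ = Real.exp (-(p * ((n:ℝ) - k))) := by
          rw [Nat.cast_sub hkn]; ring_nf
  calc (∑ i ∈ Finset.range (k+1), p ^ i * (1-p) ^ (n-i) * (n.choose i : ℝ))
      ≤ ∑ i ∈ Finset.range (k+1), (n.choose i : ℝ) * (1-p) ^ (n-k) :=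
        Finset.sum_le_sum hterm
    _ = (∑ i ∈ Finset.range (k+1), (n.choose i : ℝ)) * (1-p) ^ (n-k) := by
        rw [← Finset.sum_mul]
    _ ≤ (Real.exp 1 * n / k) ^ k * Real.exp (-(p * ((n:ℝ) - k))) := by
        apply mul_le_mul (sum_choose_le_pow n k hk1 hkn) hexp (by positivity)
        positivity
end

section
/- For every real number c ≥ 1 there exists a threshold V₀ > e such that for all real V ≥ V₀ the following holds: let n = ⌈6c · (log V)²⌉ and let Y be distributed according to the binomial distribution with n trials and success probability p = 1/log V. Then P((Y : ℝ) ≤ c · log V / log log V) ≤ V^(−c). Equivalently, in 6c·log² V flips of a coin with heads probability 1/log V, there are at least c · log V / log log V heads with probability at least 1 − V^(−c). -/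
set_option maxHeartbeats 1000000

open Real

lemma coin_key (c V : ℝ) (hc : 1 ≤ c) (hV : Real.exp (Real.exp (20 * c)) ≤ V)
    (n k : ℕ) (hn1 : 6 * c * Real.log V ^ 2 ≤ n) (hn2 : (n : ℝ) ≤ 6 * c * Real.log V ^ 2 + 1)
    (hk : (k : ℝ) ≤ c * Real.log V / Real.log (Real.log V)) :
    ((k : ℝ) + 1) * ((n * (1 / Real.log V)) ^ k * (1 - 1 / Real.log V) ^ (n - k)) ≤ V ^ (-c) := by
  set L := Real.log V with hL
  have hV0 : (0:ℝ) < V := lt_of_lt_of_le (exp_pos _) hV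
  have h20c : (20:ℝ) ≤ 20 * c := by nlinarith
  have hLbig : Real.exp (20 * c) ≤ L := by
    rw [hL]
    calc Real.exp (20 * c) = Real.log (Real.exp (Real.exp (20 * c))) := by rw [Real.log_exp]
    _ ≤ Real.log V := Real.log_le_log (exp_pos _) hV
  have hL20 : Real.exp 20 ≤ L := le_trans (exp_le_exp.2 h20c) hLbig
  have hLge : (21:ℝ) ≤ L := le_trans (by nlinarith [Real.add_one_le_exp (20:ℝ)]) hL20
  have hL1 : (1:ℝ) < L := by linarith
  have hL0 : (0:ℝ) < L := by linarith
  set LL := Real.log L with hLL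
  have hLL20 : 20 * c ≤ LL := by
    rw [hLL]
    calc 20 * c = Real.log (Real.exp (20 * c)) := (Real.log_exp _).symm
    _ ≤ Real.log L := Real.log_le_log (exp_pos _) hLbig
  have hLL0 : (0:ℝ) < LL := lt_of_lt_of_le (by nlinarith) hLL20
  set p := 1 / L with hp
  have hp0 : 0 < p := by positivity
  have hp1 : p ≤ 1 := by rw [hp, div_le_one hL0]; linarith
  set K := c * L / LL with hK
  have hcL : (20:ℝ) ≤ c * L := by nlinarith
  have hKle : K ≤ c * L / 20 := by
    rw [hK]
    apply div_le_div_of_nonneg_left (by nlinarith) (by norm_num) (by nlinarith)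
  have hKcL : K ≤ c * L := by nlinarith
  -- k+1 ≤ cL
  have hk1 : (k : ℝ) + 1 ≤ c * L := by nlinarith [le_trans hk hKle]
  -- np ≤ 7cL
  have hnp : (n:ℝ) * p ≤ 7 * c * L := by
    rw [hp, mul_one_div]
    rw [div_le_iff₀ hL0]
    have : 1 ≤ c * L * L := by nlinarith
    nlinarith
  have hnp1 : (1:ℝ) ≤ (n:ℝ) * p := by
    rw [hp, mul_one_div, le_div_iff₀ hL0]
    have h1 : L ≤ 6 * c * L ^ 2 := by nlinarith [sq_nonneg L]
    linarith
  have hnp0 : (0:ℝ) < (n:ℝ) * p := lt_of_lt_of_le one_pos hnp1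
  -- k ≤ n
  have hkn : (k:ℝ) ≤ (n:ℝ) := by nlinarith [le_trans hk hKcL]
  have hknN : k ≤ n := by exact_mod_cast hkn
  -- (np)^k ≤ exp (2cL)
  have hlog7 : Real.log (7 * c * L) ≤ 2 * LL := by
    have h7c0 : (0:ℝ) < 7 * c := by linarith
    have heq : Real.log (7 * c * L) = Real.log (7 * c) + LL := by
      rw [hLL, Real.log_mul (ne_of_gt h7c0) (ne_of_gt hL0)]
    have h1 : Real.log (7 * c) ≤ 7 * c - 1 := by
      nlinarith [Real.add_one_le_exp (Real.log (7 * c)), Real.exp_log h7c0]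
    linarith
  have hB : ((n:ℝ) * p) ^ k ≤ Real.exp (2 * c * L) := by
    have h1 : ((n:ℝ) * p) ^ k = Real.exp ((k:ℝ) * Real.log ((n:ℝ) * p)) := by
      rw [← Real.log_pow, Real.exp_log (pow_pos hnp0 k)]
    rw [h1, Real.exp_le_exp]
    have h2 : Real.log ((n:ℝ) * p) ≤ Real.log (7 * c * L) := Real.log_le_log hnp0 hnp
    have h3 : (0:ℝ) ≤ Real.log ((n:ℝ) * p) := Real.log_nonneg hnp1
    have h4 : (k:ℝ) * Real.log ((n:ℝ) * p) ≤ K * (2 * LL) := by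
      apply mul_le_mul (le_trans hk (le_refl K)) (le_trans h2 hlog7) h3 ?_
      · rw [hK]; positivity
    calc (k:ℝ) * Real.log ((n:ℝ) * p) ≤ K * (2 * LL) := h4
    _ = 2 * c * L := by rw [hK]; field_simp
  -- (1-p)^(n-k) ≤ exp (c - 6cL)
  have hcast : ((n - k : ℕ) : ℝ) = (n:ℝ) - (k:ℝ) := Nat.cast_sub hknN
  have hC : (1 - p) ^ (n - k) ≤ Real.exp (c - 6 * c * L) := by
    have h1 : (1 - p) ^ (n - k) ≤ Real.exp (-p) ^ (n - k) := by
      apply pow_le_pow_left₀ (by linarith)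
      nlinarith [Real.add_one_le_exp (-p)]
    have h2 : Real.exp (-p) ^ (n - k) = Real.exp (-(p * ((n:ℝ) - (k:ℝ)))) := by
      rw [← Real.exp_nat_mul, hcast]; ring_nf
    have h3 : 6 * c * L - c ≤ p * ((n:ℝ) - (k:ℝ)) := by
      rw [hp]
      have hkK : (k:ℝ) ≤ c * L := le_trans hk hKcL
      rw [one_div, inv_mul_eq_div, le_div_iff₀ hL0]
      nlinarith
    calc (1 - p) ^ (n - k) ≤ Real.exp (-(p * ((n:ℝ) - (k:ℝ)))) := by rw [← h2]; exact h1
    _ ≤ Real.exp (c - 6 * c * L) := by rw [Real.exp_le_exp]; linarith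
  -- combine
  have hfinal : ((k:ℝ) + 1) * (((n:ℝ) * p) ^ k * (1 - p) ^ (n - k)) ≤ Real.exp (-(c * L)) := by
    have hA : ((k:ℝ) + 1) ≤ Real.exp (Real.log (c * L)) := by
      rw [Real.exp_log (by nlinarith)]; exact hk1
    have hlogcL : Real.log (c * L) ≤ c * L - 1 := by
      nlinarith [Real.add_one_le_exp (Real.log (c * L)), Real.exp_log (show (0:ℝ) < c * L by nlinarith)]
    have hk0 : (0:ℝ) ≤ (k:ℝ) + 1 := by positivity
    have hB0 : (0:ℝ) ≤ ((n:ℝ) * p) ^ k := by positivity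
    have hC0 : (0:ℝ) ≤ (1 - p) ^ (n - k) := pow_nonneg (by linarith) _
    calc ((k:ℝ) + 1) * (((n:ℝ) * p) ^ k * (1 - p) ^ (n - k))
        ≤ Real.exp (Real.log (c * L)) * (Real.exp (2 * c * L) * Real.exp (c - 6 * c * L)) := by
          apply mul_le_mul hA ?_ (mul_nonneg hB0 hC0) (le_of_lt (exp_pos _))
          exact mul_le_mul hB hC hC0 (le_of_lt (exp_pos _))
    _ = Real.exp (Real.log (c * L) + (2 * c * L + (c - 6 * c * L))) := by
          rw [← Real.exp_add, ← Real.exp_add]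
    _ ≤ Real.exp (-(c * L)) := by
          rw [Real.exp_le_exp]
          nlinarith
  have hrpow : V ^ (-c) = Real.exp (-(c * L)) := by
    rw [Real.rpow_def_of_pos hV0, hL]; ring_nf
  rw [hrpow]
  exact hfinal

/-- For every real `c ≥ 1` there is a threshold `V₀ > e` such that for all `V ≥ V₀`:
if `Y` is binomial with `n = ⌈6c · (log V)²⌉` trials and success probability `p = 1/log V`,
then `P((Y : ℝ) ≤ c · log V / log log V) ≤ V^(−c)`. Equivalently, in `6c·log² V` flips of a
coin with heads probability `1/log V`, there are at least `c · log V / log log V` heads with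
probability at least `1 − V^(−c)`. -/
theorem coin_flip_lemma (c : ℝ) (hc : 1 ≤ c) :
    ∃ V₀ : ℝ, V₀ > Real.exp 1 ∧ ∀ V : ℝ, V₀ ≤ V →
      ∀ h : Real.toNNReal (1 / Real.log V) ≤ 1,
        (PMF.binomial (Real.toNNReal (1 / Real.log V)) h
              ⌈6 * c * Real.log V ^ 2⌉₊).toMeasure
            {y | ((y : ℕ) : ℝ) ≤ c * Real.log V / Real.log (Real.log V)}
          ≤ ENNReal.ofReal (V ^ (-c)) := by
  refine ⟨Real.exp (Real.exp (20 * c)), ?_, ?_⟩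
  · apply Real.exp_lt_exp.2
    nlinarith [Real.add_one_le_exp (20 * c)]
  intro V hV h
  set L := Real.log V with hL
  have hV0 : (0:ℝ) < V := lt_of_lt_of_le (exp_pos _) hV
  have hLbig : Real.exp (20 * c) ≤ L := by
    rw [hL]
    calc Real.exp (20 * c) = Real.log (Real.exp (Real.exp (20 * c))) := by rw [Real.log_exp]
    _ ≤ Real.log V := Real.log_le_log (exp_pos _) hV
  have hLge : (21:ℝ) ≤ L := by nlinarith [Real.add_one_le_exp (20 * c), hLbig]
  have hL0 : (0:ℝ) < L := by linarith
  set LL := Real.log L with hLL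
  have hLL20 : 20 * c ≤ LL := by
    rw [hLL]
    calc 20 * c = Real.log (Real.exp (20 * c)) := (Real.log_exp _).symm
    _ ≤ Real.log L := Real.log_le_log (exp_pos _) hLbig
  have hLL0 : (0:ℝ) < LL := by nlinarith
  set p := 1 / L with hp
  have hp0 : (0:ℝ) ≤ p := by positivity
  have hp1 : p ≤ 1 := by rw [hp, div_le_one hL0]; linarith
  set n := ⌈6 * c * L ^ 2⌉₊ with hn
  have hKpos : (0:ℝ) ≤ c * L / LL := by positivity
  set k := ⌊c * L / LL⌋₊ with hkdef
  have hn1 : 6 * c * L ^ 2 ≤ (n:ℝ) := Nat.le_ceil _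
  have hn2 : (n:ℝ) ≤ 6 * c * L ^ 2 + 1 := le_of_lt (Nat.ceil_lt_add_one (by positivity))
  have hk : (k:ℝ) ≤ c * L / LL := Nat.floor_le hKpos
  -- basic size facts for per-term bounds
  have hnp1 : (1:ℝ) ≤ (n:ℝ) * p := by
    rw [hp, mul_one_div, le_div_iff₀ hL0]
    have h1 : L ≤ 6 * c * L ^ 2 := by nlinarith [sq_nonneg L]
    linarith
  have hkn : k ≤ n := by
    have h1 : (k:ℝ) ≤ (n:ℝ) := by
      have h2 : c * L / LL ≤ c * L := by
        rw [div_le_iff₀ hLL0]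
        have hcL0 : (0:ℝ) ≤ c * L := by nlinarith
        nlinarith [mul_le_mul_of_nonneg_left (show (1:ℝ) ≤ LL by nlinarith) hcL0]
      nlinarith [le_trans hk h2, sq_nonneg L]
    exact_mod_cast h1
  set M := ((n:ℝ) * p) ^ k * (1 - p) ^ (n - k) with hM
  -- per-term bound
  have hterm : ∀ x : Fin (n + 1), (x:ℕ) ≤ k →
      (PMF.binomial (Real.toNNReal p) h n) x ≤ ENNReal.ofReal M := by
    intro x hx
    rw [PMF.binomial_apply]
    rw [Fin.val_last]
    rw [show ((Real.toNNReal p : NNReal) : ENNReal) = ENNReal.ofReal p from rfl]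
    have h1m : (1 : ENNReal) - ENNReal.ofReal p = ENNReal.ofReal (1 - p) := by
      rw [ENNReal.ofReal_sub _ hp0, ENNReal.ofReal_one]
    rw [h1m, ← ENNReal.ofReal_pow hp0, ← ENNReal.ofReal_pow (by linarith),
      ← ENNReal.ofReal_mul (pow_nonneg hp0 _), ← ENNReal.ofReal_natCast,
      ← ENNReal.ofReal_mul (mul_nonneg (pow_nonneg hp0 _) (pow_nonneg (by linarith) _))]
    apply ENNReal.ofReal_le_ofReal
    have hch : ((n.choose x : ℕ) : ℝ) ≤ ((n:ℝ)) ^ (x:ℕ) := by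
      exact_mod_cast Nat.cast_le.2 (Nat.choose_le_pow (n := n) (k := x))
    have hq0 : (0:ℝ) ≤ 1 - p := by linarith
    calc p ^ (x:ℕ) * (1 - p) ^ (n - (x:ℕ)) * ((n.choose x : ℕ) : ℝ)
        ≤ p ^ (x:ℕ) * (1 - p) ^ (n - (x:ℕ)) * (n:ℝ) ^ (x:ℕ) := by
          apply mul_le_mul_of_nonneg_left hch (by positivity)
    _ = ((n:ℝ) * p) ^ (x:ℕ) * (1 - p) ^ (n - (x:ℕ)) := by ring
    _ ≤ ((n:ℝ) * p) ^ k * (1 - p) ^ (n - (x:ℕ)) := by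
          apply mul_le_mul_of_nonneg_right (pow_le_pow_right₀ hnp1 hx) (by positivity)
    _ ≤ ((n:ℝ) * p) ^ k * (1 - p) ^ (n - k) := by
          apply mul_le_mul_of_nonneg_left
            (pow_le_pow_of_le_one hq0 (by linarith) (Nat.sub_le_sub_left hx n)) (by positivity)
  -- sum bound
  classical
  show (PMF.binomial (Real.toNNReal p) h n).toMeasure
      {y : Fin (n+1) | ((y : ℕ) : ℝ) ≤ c * L / LL} ≤ ENNReal.ofReal (V ^ (-c))
  set S := {y : Fin (n+1) | ((y : ℕ) : ℝ) ≤ c * L / LL} with hS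
  rw [PMF.toMeasure_apply_fintype]
  have hsum : ∑ x : Fin (n+1), S.indicator (PMF.binomial (Real.toNNReal p) h n) x
      ≤ ∑ x : Fin (n+1), (if (x:ℕ) ≤ k then ENNReal.ofReal M else 0) := by
    apply Finset.sum_le_sum
    intro x _
    rw [Set.indicator_apply]
    by_cases hx : x ∈ S
    · have hxk : (x:ℕ) ≤ k := Nat.le_floor hx
      rw [if_pos hx, if_pos hxk]
      exact hterm x hxk
    · rw [if_neg hx]
      exact zero_le
  refine le_trans hsum ?_
  rw [← Finset.sum_filter, Finset.sum_const]
  have hcard : (Finset.univ.filter (fun x : Fin (n+1) => (x:ℕ) ≤ k)).card ≤ k + 1 := by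
    have := Finset.card_le_card_of_injOn (s := Finset.univ.filter (fun x : Fin (n+1) => (x:ℕ) ≤ k)) (t := Finset.range (k+1)) (fun x : Fin (n+1) => (x:ℕ))
      (fun a ha => Finset.mem_range.2 (Nat.lt_succ_of_le (Finset.mem_filter.1 ha).2))
      (Fin.val_injective.injOn)
    rwa [Finset.card_range] at this
  calc (Finset.univ.filter (fun x : Fin (n+1) => (x:ℕ) ≤ k)).card • ENNReal.ofReal M
      ≤ (k + 1 : ℕ) • ENNReal.ofReal M := smul_le_smul_of_nonneg_right hcard zero_le
  _ = ENNReal.ofReal ((k + 1 : ℕ) : ℝ) * ENNReal.ofReal M := by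
      rw [nsmul_eq_mul, ENNReal.ofReal_natCast]
  _ = ENNReal.ofReal (((k + 1 : ℕ) : ℝ) * M) := (ENNReal.ofReal_mul (by positivity)).symm
  _ ≤ ENNReal.ofReal (V ^ (-c)) := by
      apply ENNReal.ofReal_le_ofReal
      have := coin_key c V hc hV n k hn1 hn2 hk
      rw [hM]
      push_cast
      rw [hp]
      exact this
end
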